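/- Suppose W is a graphon such that for some admissible histogram f* we have ‖f*‖₁ = κ(W), where κ(W) = sup{‖f‖₁ : f nonnegative L¹, Γ(f,W) ≥ 0}. Then every nonnegative measurable function f with f ≤ f* pointwise satisfies Γ(f,W) ≥ 0. -/

import Mathlib

open MeasureTheory

/-- `log(1/W(x,y))` as an extended nonnegative real, with value `∞` when `W(x,y) = 0`. -/
noncomputable def negLog {Ω : Type*} (W : Ω → Ω → ℝ) (x y : Ω) : ENNReal :=
  if W x y = 0 then ⊤ else ENNReal.ofReal (-Real.log (W x y))

section Aux

variable {Ω : Type*} [MeasurableSpace Ω]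

/-- The bilinear form `∫∫ u(x) v(y) k(x,y)`. -/
noncomputable def Lk (ν : Measure Ω) (k : Ω × Ω → ENNReal) (u v : Ω → ENNReal) : ENNReal :=
  ∫⁻ z, u z.1 * v z.2 * k z ∂(ν.prod ν)

variable {ν : Measure Ω} [SigmaFinite ν] {k : Ω × Ω → ENNReal} {u v w : Ω → ENNReal}

lemma lk_meas (hk : Measurable k) (hu : Measurable u) (hv : Measurable v) :
    Measurable fun z : Ω × Ω => u z.1 * v z.2 * k z :=
  ((hu.comp measurable_fst).mul (hv.comp measurable_snd)).mul hk

lemma Lk_mono {u' v' : Ω → ENNReal} (hu : ∀ x, u x ≤ u' x) (hv : ∀ x, v x ≤ v' x) :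
    Lk ν k u v ≤ Lk ν k u' v' :=
  lintegral_mono fun z => mul_le_mul' (mul_le_mul' (hu _) (hv _)) le_rfl

lemma Lk_add_left (hk : Measurable k) (hu : Measurable u) (hw : Measurable w)
    (v : Ω → ENNReal) :
    Lk ν k (fun x => u x + v x) w = Lk ν k u w + Lk ν k v w := by
  unfold Lk
  simp_rw [add_mul]
  exact lintegral_add_left (lk_meas hk hu hw) _

lemma Lk_add_right (hk : Measurable k) (hu : Measurable u) (hv : Measurable v)
    (w : Ω → ENNReal) :
    Lk ν k u (fun x => v x + w x) = Lk ν k u v + Lk ν k u w := by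
  unfold Lk
  simp_rw [mul_add, add_mul]
  exact lintegral_add_left (lk_meas hk hu hv) _

lemma Lk_const_mul_left (hk : Measurable k) (hu : Measurable u) (hv : Measurable v)
    (c : ENNReal) :
    Lk ν k (fun x => c * u x) v = c * Lk ν k u v := by
  unfold Lk
  have h : ∀ z : Ω × Ω, (c * u z.1) * v z.2 * k z = c * (u z.1 * v z.2 * k z) :=
    fun z => by ring
  simp_rw [h]
  exact lintegral_const_mul c (lk_meas hk hu hv)

lemma Lk_const_mul_right (hk : Measurable k) (hu : Measurable u) (hv : Measurable v)
    (c : ENNReal) :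
    Lk ν k u (fun x => c * v x) = c * Lk ν k u v := by
  unfold Lk
  have h : ∀ z : Ω × Ω, u z.1 * (c * v z.2) * k z = c * (u z.1 * v z.2 * k z) :=
    fun z => by ring
  simp_rw [h]
  exact lintegral_const_mul c (lk_meas hk hu hv)

lemma Lk_comm (hsym : ∀ x y, k (x, y) = k (y, x)) :
    Lk ν k u v = Lk ν k v u := by
  unfold Lk
  rw [← lintegral_prod_swap (fun z : Ω × Ω => u z.1 * v z.2 * k z)]
  refine lintegral_congr fun z => ?_
  simp only [Prod.fst_swap, Prod.snd_swap]
  rw [show z.swap = (z.2, z.1) from rfl, ← hsym z.2 z.1, mul_comm (u z.2) (v z.1)]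

lemma half_mul_le_iff {x y : ENNReal} : (1 / 2 : ENNReal) * x ≤ y ↔ x ≤ 2 * y := by
  rw [one_div]
  constructor
  · intro h
    have h2 := mul_le_mul_right h (2 : ENNReal)
    rwa [← mul_assoc, ENNReal.mul_inv_cancel (by simp) ENNReal.ofNat_ne_top, one_mul] at h2
  · intro h
    have h2 := mul_le_mul_right h ((2 : ENNReal)⁻¹)
    rwa [← mul_assoc, ENNReal.inv_mul_cancel (by simp) ENNReal.ofNat_ne_top, one_mul] at h2

end Aux

set_option maxHeartbeats 1000000 in
/-- Lemma A.1: if an admissible histogram `f*` attains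
`κ(W) = sup{‖f‖₁ : f nonnegative L¹, Γ(f,W) ≥ 0}`, then every nonnegative measurable
`f ≤ f*` is admissible, i.e. satisfies `Γ(f,W) ≥ 0`.  (Admissibility `Γ(f,W) ≥ 0` is
expressed as `(1/2) ∫∫ f(x)f(y) log(1/W(x,y)) ≤ ∫ f`.) -/
theorem subhistogram_of_optimal_admissible {Ω : Type*} [MeasurableSpace Ω]
    (ν : Measure Ω) [IsProbabilityMeasure ν]
    (W : Ω → Ω → ℝ) (hW : Measurable (Function.uncurry W))
    (hsymm : ∀ x y, W x y = W y x) (h0 : ∀ x y, 0 ≤ W x y) (h1 : ∀ x y, W x y ≤ 1)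
    (fstar : Ω → ENNReal) (hfm : Measurable fstar) (hfi : (∫⁻ x, fstar x ∂ν) ≠ ⊤)
    (hadm : (1 / 2) * (∫⁻ z, fstar z.1 * fstar z.2 * negLog W z.1 z.2 ∂(ν.prod ν)) ≤
      ∫⁻ x, fstar x ∂ν)
    (hopt : (∫⁻ x, fstar x ∂ν) =
      sSup {r : ENNReal | ∃ f : Ω → ENNReal, Measurable f ∧ (∫⁻ x, f x ∂ν) ≠ ⊤ ∧
        (1 / 2) * (∫⁻ z, f z.1 * f z.2 * negLog W z.1 z.2 ∂(ν.prod ν)) ≤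
          (∫⁻ x, f x ∂ν) ∧
        r = ∫⁻ x, f x ∂ν}) :
    ∀ f : Ω → ENNReal, Measurable f → (∀ x, f x ≤ fstar x) →
      (1 / 2) * (∫⁻ z, f z.1 * f z.2 * negLog W z.1 z.2 ∂(ν.prod ν)) ≤
        ∫⁻ x, f x ∂ν := by
  classical
  set k : Ω × Ω → ENNReal := fun z => negLog W z.1 z.2 with hkdef
  have hLk_def : ∀ u v : Ω → ENNReal,
      Lk ν k u v = ∫⁻ z, u z.1 * v z.2 * negLog W z.1 z.2 ∂(ν.prod ν) := by
    intro u v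
    rw [hkdef]
    rfl
  have hk : Measurable k := by
    have hWz : Measurable fun z : Ω × Ω => W z.1 z.2 := hW
    have h1m : Measurable fun z : Ω × Ω => ENNReal.ofReal (-Real.log (W z.1 z.2)) :=
      ENNReal.measurable_ofReal.comp (Real.measurable_log.comp hWz).neg
    have hset : MeasurableSet {z : Ω × Ω | W z.1 z.2 = 0} :=
      hWz (measurableSet_singleton 0)
    exact Measurable.ite hset measurable_const h1m
  have hksym : ∀ x y, k (x, y) = k (y, x) := by
    intro x y
    simp only [hkdef, negLog, hsymm x y]
  intro f hf hle
  rw [← hLk_def f f]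
  by_contra hcon
  push_neg at hcon
  -- the defect function
  set g : Ω → ENNReal := fun x => fstar x - f x with hgdef
  have hg : Measurable g := hfm.sub hf
  have hfg : ∀ x, f x + g x = fstar x := fun x => add_tsub_cancel_of_le (hle x)
  have hgle : ∀ x, g x ≤ fstar x := fun x => tsub_le_self
  set a : ENNReal := ∫⁻ x, f x ∂ν with hadef
  set b : ENNReal := ∫⁻ x, g x ∂ν with hbdef
  set S : ENNReal := ∫⁻ x, fstar x ∂ν with hSdef
  set F : ENNReal := Lk ν k f f with hFdef
  set E : ENNReal := Lk ν k f g with hEdef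
  set G : ENNReal := Lk ν k g g with hGdef
  -- basic facts
  have hSab : S = a + b := by
    rw [hSdef, hadef, hbdef, ← lintegral_add_left hf g]
    exact lintegral_congr fun x => (hfg x).symm
  have haS : a ≤ S := lintegral_mono fun x => hle x
  have hbS : b ≤ S := lintegral_mono fun x => hgle x
  have haT : a ≠ ⊤ := fun h => hfi (top_le_iff.1 (h ▸ haS))
  have hbT : b ≠ ⊤ := fun h => hfi (top_le_iff.1 (h ▸ hbS))
  -- expansion of L(f*, f*)
  have hstar_exp : Lk ν k fstar fstar = F + E + (E + G) := by
    have h1 : Lk ν k fstar fstar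
        = Lk ν k (fun x => f x + g x) (fun x => f x + g x) := by
      have : (fun x => f x + g x) = fstar := funext hfg
      rw [this]
    rw [h1, Lk_add_left (w := fun x => f x + g x) hk hf (hf.add hg) g, Lk_add_right hk hf hf g,
      Lk_add_right hk hg hf g, Lk_comm hksym (u := g) (v := f)]
  have hstar_le : Lk ν k fstar fstar ≤ 2 * S := half_mul_le_iff.1 (by rw [hLk_def]; exact hadm)
  have h2ST : (2 : ENNReal) * S ≠ ⊤ := ENNReal.mul_ne_top (by simp) hfi
  have hstarT : Lk ν k fstar fstar ≠ ⊤ := fun h => h2ST (top_le_iff.1 (h ▸ hstar_le))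
  have hFle : F ≤ Lk ν k fstar fstar := Lk_mono hle hle
  have hEle : E ≤ Lk ν k fstar fstar := Lk_mono hle hgle
  have hGle : G ≤ Lk ν k fstar fstar := Lk_mono hgle hgle
  have hFT : F ≠ ⊤ := fun h => hstarT (top_le_iff.1 (h ▸ hFle))
  have hET : E ≠ ⊤ := fun h => hstarT (top_le_iff.1 (h ▸ hEle))
  have hGT : G ≠ ⊤ := fun h => hstarT (top_le_iff.1 (h ▸ hGle))
  have hΓstar : F + E + (E + G) ≤ 2 * (a + b) := by
    rw [← hstar_exp, ← hSab]; exact hstar_le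
  have h2aF : 2 * a < F := by
    have h2 : a < (1 / 2 : ENNReal) * F := hcon
    calc 2 * a < 2 * ((1 / 2 : ENNReal) * F) :=
          ENNReal.mul_lt_mul_right (by simp) ENNReal.ofNat_ne_top h2
      _ = F := by
          rw [← mul_assoc, one_div, ENNReal.mul_inv_cancel (by simp) ENNReal.ofNat_ne_top,
            one_mul]
  -- pass to real numbers
  set A : ℝ := a.toReal with hA
  set B : ℝ := b.toReal with hB
  set Fr : ℝ := F.toReal with hFr
  set Er : ℝ := E.toReal with hEr
  set Gr : ℝ := G.toReal with hGr
  have hA0 : 0 ≤ A := ENNReal.toReal_nonneg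
  have hB0 : 0 ≤ B := ENNReal.toReal_nonneg
  have hEr0 : 0 ≤ Er := ENNReal.toReal_nonneg
  have hGr0 : 0 ≤ Gr := ENNReal.toReal_nonneg
  have h2aFr : 2 * A < Fr := by
    have h2aT : (2 : ENNReal) * a ≠ ⊤ := ENNReal.mul_ne_top (by simp) haT
    have := (ENNReal.toReal_lt_toReal h2aT hFT).2 h2aF
    rwa [ENNReal.toReal_mul, ENNReal.toReal_ofNat] at this
  have hsumR : Fr + Er + (Er + Gr) ≤ 2 * (A + B) := by
    have hlT : F + E + (E + G) ≠ ⊤ := by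
      simp [ENNReal.add_ne_top, hFT, hET, hGT]
    have h2abT : (2 : ENNReal) * (a + b) ≠ ⊤ := by
      simp [ENNReal.mul_eq_top, ENNReal.add_ne_top, haT, hbT]
    have := (ENNReal.toReal_le_toReal hlT h2abT).2 hΓstar
    rwa [ENNReal.toReal_add (by simp [ENNReal.add_ne_top, hFT, hET]) (by
        simp [ENNReal.add_ne_top, hET, hGT]),
      ENNReal.toReal_add hFT hET, ENNReal.toReal_add hET hGT,
      ENNReal.toReal_mul, ENNReal.toReal_ofNat, ENNReal.toReal_add haT hbT] at this
  have hMpos : 0 < 2 * B - (Er + Gr) := by linarith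
  set ε : ℝ := (2 * B - (Er + Gr)) / (Gr + 1) with hε
  have hεpos : 0 < ε := div_pos hMpos (by linarith)
  have hεG : ε * Gr ≤ 2 * B - (Er + Gr) := by
    rw [hε, div_mul_eq_mul_div, div_le_iff₀ (by linarith : (0:ℝ) < Gr + 1)]
    nlinarith
  have hBpos : 0 < B := by linarith
  have hABpos : 0 < A + B := by linarith
  have hDpos : 0 < Fr + 2 * (1 + ε) * Er + (1 + ε) ^ 2 * Gr := by nlinarith
  have key : (A + B) * (Fr + 2 * (1 + ε) * Er + (1 + ε) ^ 2 * Gr)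
      < 2 * (A + (1 + ε) * B) ^ 2 := by
    have h1 : (A + B) * (Fr + Er + (Er + Gr)) ≤ (A + B) * (2 * (A + B)) :=
      mul_le_mul_of_nonneg_left hsumR hABpos.le
    have h2' : 2 * B - (Er + Gr) ≤ 2 * (2 * B - (Er + Gr)) - ε * Gr := by linarith
    have h3 : ε * (A + B) * (2 * B - (Er + Gr))
        ≤ ε * (A + B) * (2 * (2 * B - (Er + Gr)) - ε * Gr) :=
      mul_le_mul_of_nonneg_left h2' (by positivity)
    have h4 : 0 < ε * (A + B) * (2 * B - (Er + Gr)) := by positivity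
    nlinarith [h1, h3, h4, sq_nonneg (ε * B)]
  have hAβB : 0 < A + (1 + ε) * B :=
    add_pos_of_nonneg_of_pos hA0 (mul_pos (by linarith) hBpos)
  set lam : ℝ := 2 * (A + (1 + ε) * B) / (Fr + 2 * (1 + ε) * Er + (1 + ε) ^ 2 * Gr) with hlam
  have hlam0 : 0 ≤ lam := by rw [hlam]; positivity
  have hgain : A + B < lam * (A + (1 + ε) * B) := by
    rw [hlam, div_mul_eq_mul_div, lt_div_iff₀ hDpos]
    nlinarith [key]
  have h5 : lam * (Fr + 2 * (1 + ε) * Er + (1 + ε) ^ 2 * Gr) = 2 * (A + (1 + ε) * B) := by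
    rw [hlam, div_mul_cancel₀ _ hDpos.ne']
  have hadm_eq : (1 / 2 : ℝ) * (lam * (lam *
      (Fr + 2 * (1 + ε) * Er + (1 + ε) ^ 2 * Gr))) = lam * (A + (1 + ε) * B) := by
    rw [h5]
    ring
  -- the ENNReal witness
  set oβ : ENNReal := ENNReal.ofReal (1 + ε) with hoβ
  set olam : ENNReal := ENNReal.ofReal lam with holam
  have hoβT : oβ ≠ ⊤ := ENNReal.ofReal_ne_top
  have holamT : olam ≠ ⊤ := ENNReal.ofReal_ne_top
  have htβ : oβ.toReal = 1 + ε := ENNReal.toReal_ofReal (by linarith)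
  have htlam : olam.toReal = lam := ENNReal.toReal_ofReal hlam0
  have hum : Measurable fun x => f x + oβ * g x := hf.add (hg.const_mul oβ)
  have hhm : Measurable fun x => olam * (f x + oβ * g x) := hum.const_mul olam
  have hInt : (∫⁻ x, olam * (f x + oβ * g x) ∂ν) = olam * (a + oβ * b) := by
    rw [lintegral_const_mul olam hum, lintegral_add_left hf, lintegral_const_mul oβ hg]
  have hIntT : (∫⁻ x, olam * (f x + oβ * g x) ∂ν) ≠ ⊤ := by
    rw [hInt]
    exact ENNReal.mul_ne_top holamT (ENNReal.add_ne_top.2 ⟨haT, ENNReal.mul_ne_top hoβT hbT⟩)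
  have hLexp : Lk ν k (fun x => f x + oβ * g x) (fun x => f x + oβ * g x)
      = F + oβ * E + (oβ * E + oβ * (oβ * G)) := by
    rw [Lk_add_left hk hf hum (fun x => oβ * g x),
      Lk_add_right hk hf hf (fun x => oβ * g x),
      Lk_add_right hk (hg.const_mul oβ) hf (fun x => oβ * g x),
      Lk_const_mul_right hk hf hg oβ,
      Lk_const_mul_left hk hg hf oβ,
      Lk_const_mul_left hk hg (hg.const_mul oβ) oβ,
      Lk_const_mul_right hk hg hg oβ,
      Lk_comm hksym (u := g) (v := f), ← hFdef, ← hEdef, ← hGdef]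
  have hLhh : Lk ν k (fun x => olam * (f x + oβ * g x)) (fun x => olam * (f x + oβ * g x))
      = olam * (olam * (F + oβ * E + (oβ * E + oβ * (oβ * G)))) := by
    rw [Lk_const_mul_left hk hum hhm olam, Lk_const_mul_right hk hum hum olam, hLexp]
  have hXT : F + oβ * E + (oβ * E + oβ * (oβ * G)) ≠ ⊤ :=
    ENNReal.add_ne_top.2 ⟨ENNReal.add_ne_top.2 ⟨hFT, ENNReal.mul_ne_top hoβT hET⟩,
      ENNReal.add_ne_top.2 ⟨ENNReal.mul_ne_top hoβT hET,
        ENNReal.mul_ne_top hoβT (ENNReal.mul_ne_top hoβT hGT)⟩⟩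
  have hXr : (F + oβ * E + (oβ * E + oβ * (oβ * G))).toReal
      = Fr + (1 + ε) * Er + ((1 + ε) * Er + (1 + ε) * ((1 + ε) * Gr)) := by
    rw [ENNReal.toReal_add (ENNReal.add_ne_top.2 ⟨hFT, ENNReal.mul_ne_top hoβT hET⟩)
        (ENNReal.add_ne_top.2 ⟨ENNReal.mul_ne_top hoβT hET,
          ENNReal.mul_ne_top hoβT (ENNReal.mul_ne_top hoβT hGT)⟩),
      ENNReal.toReal_add hFT (ENNReal.mul_ne_top hoβT hET),
      ENNReal.toReal_add (ENNReal.mul_ne_top hoβT hET)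
        (ENNReal.mul_ne_top hoβT (ENNReal.mul_ne_top hoβT hGT))]
    simp only [ENNReal.toReal_mul, htβ, ← hFr, ← hEr, ← hGr]
  have hadm_h : (1 / 2 : ENNReal) *
      (∫⁻ z, (olam * (f z.1 + oβ * g z.1)) * (olam * (f z.2 + oβ * g z.2)) *
        negLog W z.1 z.2 ∂(ν.prod ν)) ≤ ∫⁻ x, olam * (f x + oβ * g x) ∂ν := by
    rw [← hLk_def (fun x => olam * (f x + oβ * g x)) (fun x => olam * (f x + oβ * g x)),
      hLhh, hInt]
    have hlhsT : (1 / 2 : ENNReal) *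
        (olam * (olam * (F + oβ * E + (oβ * E + oβ * (oβ * G))))) ≠ ⊤ :=
      ENNReal.mul_ne_top (by simp)
        (ENNReal.mul_ne_top holamT (ENNReal.mul_ne_top holamT hXT))
    have hrhsT : olam * (a + oβ * b) ≠ ⊤ :=
      ENNReal.mul_ne_top holamT (ENNReal.add_ne_top.2 ⟨haT, ENNReal.mul_ne_top hoβT hbT⟩)
    refine (ENNReal.toReal_le_toReal hlhsT hrhsT).1 ?_
    rw [ENNReal.toReal_mul, ENNReal.toReal_mul, ENNReal.toReal_mul, hXr,
      ENNReal.toReal_mul (a := olam),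
      ENNReal.toReal_add haT (ENNReal.mul_ne_top hoβT hbT), ENNReal.toReal_mul, htβ, htlam]
    have h12 : ((1 : ENNReal) / 2).toReal = (1 / 2 : ℝ) := by
      norm_num
    rw [h12, ← hA, ← hB]
    linarith [hadm_eq]
  have hmem : (∫⁻ x, olam * (f x + oβ * g x) ∂ν) ∈
      {r : ENNReal | ∃ f : Ω → ENNReal, Measurable f ∧ (∫⁻ x, f x ∂ν) ≠ ⊤ ∧
        (1 / 2) * (∫⁻ z, f z.1 * f z.2 * negLog W z.1 z.2 ∂(ν.prod ν)) ≤
          (∫⁻ x, f x ∂ν) ∧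
        r = ∫⁻ x, f x ∂ν} :=
    ⟨fun x => olam * (f x + oβ * g x), hhm, hIntT, hadm_h, rfl⟩
  have hle' : (∫⁻ x, olam * (f x + oβ * g x) ∂ν) ≤ S := by
    rw [hopt]
    exact le_sSup hmem
  have hgt : S < ∫⁻ x, olam * (f x + oβ * g x) ∂ν := by
    refine (ENNReal.toReal_lt_toReal hfi hIntT).1 ?_
    rw [hInt, ENNReal.toReal_mul, ENNReal.toReal_add haT (ENNReal.mul_ne_top hoβT hbT),
      ENNReal.toReal_mul, htβ, htlam, hSab, ENNReal.toReal_add haT hbT, ← hA, ← hB]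
    exact hgain
  exact absurd hle' (not_le.2 hgt)
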